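/- Let F(x) = Σ_{j=−L}^{L} c_j e^{ijx} be a trigonometric polynomial that is real-valued on ℝ and satisfies |F(x)| ≤ 1 for all x ∈ ℝ. Then there exist ω ∈ ℝ and θ, φ ∈ ℝ^{L+1} such that for all x ∈ ℝ, ⟨e_0, W^L_{ω,θ,φ}(x)† · Z · W^L_{ω,θ,φ}(x) e_0⟩ = F(x), where Z = diag(1, −1) and e_0 = (1,0)ᵀ. -/

import Mathlib

open scoped Matrix

/-- `R_z(φ) = diag(e^{-iφ/2}, e^{iφ/2})`. -/
noncomputable def Rz (φ : ℝ) : Matrix (Fin 2) (Fin 2) ℂ :=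
  !![Complex.exp (-(Complex.I * φ / 2)), 0; 0, Complex.exp (Complex.I * φ / 2)]

/-- `R_y(θ)`, the real rotation by angle `θ/2`, viewed as a complex matrix. -/
noncomputable def Ry (θ : ℝ) : Matrix (Fin 2) (Fin 2) ℂ :=
  !![(Real.cos (θ / 2) : ℂ), -(Real.sin (θ / 2) : ℂ);
     (Real.sin (θ / 2) : ℂ), (Real.cos (θ / 2) : ℂ)]

/-- The trigonometric QSP unitary
`W^L_{ω,θ,φ}(x) = R_z(ω) R_y(θ_0) R_z(φ_0) ∏_{l=1}^{L} [R_z(x) R_y(θ_l) R_z(φ_l)]`,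
multiplied left to right in increasing `l`. -/
noncomputable def Wqsp (L : ℕ) (ω : ℝ) (θ φ : ℕ → ℝ) (x : ℝ) :
    Matrix (Fin 2) (Fin 2) ℂ :=
  Rz ω * Ry (θ 0) * Rz (φ 0) *
    ((List.range L).map (fun l => Rz x * Ry (θ (l + 1)) * Rz (φ (l + 1)))).prod


open Polynomial Complex

noncomputable def cexpI (x : ℝ) : ℂ := Complex.exp (Complex.I * x)

lemma cexpI_ne_zero (x : ℝ) : cexpI x ≠ 0 := Complex.exp_ne_zero _

lemma norm_cexpI (x : ℝ) : ‖cexpI x‖ = 1 := by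
  rw [cexpI, Complex.norm_exp]; simp

lemma conj_cexpI (x : ℝ) : (starRingEnd ℂ) (cexpI x) = cexpI (-x) := by
  rw [cexpI, cexpI, ← Complex.exp_conj]; congr 1; simp

lemma cexpI_add (x y : ℝ) : cexpI (x + y) = cexpI x * cexpI y := by
  rw [cexpI, cexpI, cexpI, ← Complex.exp_add]; congr 1; push_cast; ring

lemma cexpI_pow (x : ℝ) (n : ℕ) : cexpI x ^ n = cexpI (n * x) := by
  rw [cexpI, cexpI, ← Complex.exp_nat_mul]; congr 1; push_cast; ring

lemma cexpI_inj {x y : ℝ} (hx : x ∈ Set.Ioo (0:ℝ) 1) (hy : y ∈ Set.Ioo (0:ℝ) 1)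
    (h : cexpI x = cexpI y) : x = y := by
  have : cexpI (x - y) = 1 := by
    have := cexpI_add (x - y) y
    rw [sub_add_cancel, h] at this
    field_simp [cexpI_ne_zero] at this
    exact this.symm
  rw [cexpI, Complex.exp_eq_one_iff] at this
  obtain ⟨n, hn⟩ := this
  have hxy : (Complex.I * ((x:ℂ) - y)).im = ((n:ℂ) * (2 * Real.pi * Complex.I)).im := by rw [← hn]; push_cast; ring_nf
  simp [Complex.mul_im] at hxy
  have hn2 : x - y = n * (2 * Real.pi) := by simpa using hxy
  have hpi := Real.pi_gt_three
  by_cases hn0 : n = 0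
  · rw [hn0] at hn2; push_cast at hn2; linarith
  · exfalso
    have h1 : (1:ℝ) ≤ |(n:ℝ)| := by exact_mod_cast Int.one_le_abs hn0
    have h2 : |x - y| < 1 := by
      rw [abs_lt]; constructor <;> [linarith [hx.1, hy.2]; linarith [hx.2, hy.1]]
    rw [hn2, abs_mul, abs_of_pos (by positivity : (0:ℝ) < 2 * Real.pi)] at h2
    nlinarith

/-- A polynomial vanishing on the whole unit circle is zero. -/
lemma poly_eq_zero_of_circle (q : Polynomial ℂ) (h : ∀ x : ℝ, q.eval (cexpI x) = 0) : q = 0 := by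
  apply Polynomial.eq_zero_of_infinite_isRoot
  apply Set.Infinite.mono (s := (fun x : ℝ => cexpI x) '' (Set.Ioo 0 1))
  · rintro z ⟨x, _, rfl⟩; exact h x
  · exact Set.Infinite.image (fun a ha b hb hab => cexpI_inj ha hb hab)
      (Set.Ioo_infinite (by norm_num))


noncomputable def conjReflect (n : ℕ) (q : Polynomial ℂ) : Polynomial ℂ :=
  ∑ k ∈ Finset.range (n+1), Polynomial.C ((starRingEnd ℂ) (q.coeff (n - k))) * Polynomial.X ^ k

lemma conjReflect_coeff (n : ℕ) (q : Polynomial ℂ) (k : ℕ) (hk : k ≤ n) :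
    (conjReflect n q).coeff k = (starRingEnd ℂ) (q.coeff (n - k)) := by
  rw [conjReflect, Polynomial.finset_sum_coeff]
  rw [Finset.sum_eq_single k]
  · simp
  · intro b _ hb; simp [Polynomial.coeff_C_mul, Polynomial.coeff_X_pow, hb, Ne.symm hb]
  · intro hk'; exact absurd (Finset.mem_range.2 (Nat.lt_succ_of_le hk)) hk'

lemma conjReflect_coeff_gt (n : ℕ) (q : Polynomial ℂ) (k : ℕ) (hk : n < k) :
    (conjReflect n q).coeff k = 0 := by
  rw [conjReflect, Polynomial.finset_sum_coeff]
  apply Finset.sum_eq_zero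
  intro b hb
  have : b ≠ k := by have := Finset.mem_range.1 hb; omega
  simp [Polynomial.coeff_C_mul, Polynomial.coeff_X_pow, this, Ne.symm this]

lemma conjReflect_natDegree_le (n : ℕ) (q : Polynomial ℂ) : (conjReflect n q).natDegree ≤ n :=
  Polynomial.natDegree_le_iff_coeff_eq_zero.2 fun _ h => conjReflect_coeff_gt n q _ h

lemma conjReflect_eval (n : ℕ) (q : Polynomial ℂ) (hq : q.natDegree ≤ n) (w : ℂ) (hw : w ≠ 0) :
    (conjReflect n q).eval w = w ^ n * (starRingEnd ℂ) (q.eval (((starRingEnd ℂ) w)⁻¹)) := by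
  have hqe : q.eval (((starRingEnd ℂ) w)⁻¹) =
      ∑ j ∈ Finset.range (n+1), q.coeff j * (((starRingEnd ℂ) w)⁻¹) ^ j :=
    Polynomial.eval_eq_sum_range' (Nat.lt_succ_of_le hq) _
  rw [hqe, map_sum, Finset.mul_sum]
  have : (conjReflect n q).eval w
      = ∑ k ∈ Finset.range (n+1), (starRingEnd ℂ) (q.coeff (n - k)) * w ^ k := by
    rw [conjReflect]; simp [Polynomial.eval_finset_sum]
  rw [this, ← Finset.sum_range_reflect]
  apply Finset.sum_congr rfl
  intro j hj
  have hj' : j ≤ n := by have := Finset.mem_range.1 hj; omega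
  have h1 : n + 1 - 1 - j = n - j := by omega
  have h2 : n - (n - j) = j := by omega
  rw [h1, h2, map_mul, map_pow, map_inv₀, Complex.conj_conj]
  have hpj : w ^ j ≠ 0 := pow_ne_zero _ hw
  rw [inv_pow]
  field_simp
  rw [mul_assoc, ← pow_add]
  have h3 : n - j + j = n := by omega
  rw [h3, mul_comm]

lemma cexpI_neg (x : ℝ) : cexpI (-x) = (cexpI x)⁻¹ := by
  rw [cexpI, cexpI, ← Complex.exp_neg]; congr 1; push_cast; ring

lemma conjReflect_eval_circle (n : ℕ) (q : Polynomial ℂ) (hq : q.natDegree ≤ n) (x : ℝ) :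
    (conjReflect n q).eval (cexpI x) = cexpI ((n:ℝ) * x) * (starRingEnd ℂ) (q.eval (cexpI x)) := by
  rw [conjReflect_eval n q hq _ (cexpI_ne_zero x), cexpI_pow]
  congr 3
  rw [conj_cexpI, cexpI_neg, inv_inv]


noncomputable def fval (L : ℕ) (q : Polynomial ℂ) (x : ℝ) : ℂ :=
  cexpI (-(L * x)) * q.eval (cexpI x)

lemma fval_continuous (L : ℕ) (q : Polynomial ℂ) : Continuous (fval L q) := by
  unfold fval cexpI
  fun_prop

lemma cexpI_mul_conj (x : ℝ) : cexpI x * (starRingEnd ℂ) (cexpI x) = 1 := by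
  rw [Complex.mul_conj', norm_cexpI]; norm_num

/-- points of `(x₀, x₀+2π)` stay away from `cexpI x₀` on the circle -/
lemma cexpI_ne_of_Ioo {x₀ x : ℝ} (h : x ∈ Set.Ioo x₀ (x₀ + 2*Real.pi)) :
    cexpI x ≠ cexpI x₀ := by
  intro he
  have h1 : cexpI (x - x₀) = 1 := by
    have := cexpI_add (x - x₀) x₀
    rw [sub_add_cancel, he] at this
    field_simp [cexpI_ne_zero] at this
    exact this.symm
  rw [cexpI, Complex.exp_eq_one_iff] at h1
  obtain ⟨n, hn⟩ := h1
  have hxy : (Complex.I * ((x:ℂ) - x₀)).im = ((n:ℂ) * (2 * Real.pi * Complex.I)).im := by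
    rw [← hn]; push_cast; ring_nf
  simp [Complex.mul_im] at hxy
  have hn2 : x - x₀ = n * (2 * Real.pi) := by simpa using hxy
  have hpi := Real.pi_pos
  have h2 : 0 < x - x₀ := by linarith [h.1]
  have h3 : x - x₀ < 2*Real.pi := by linarith [h.2]
  rcases lt_trichotomy (n:ℤ) 1 with hlt | heq | hgt
  · have : (n:ℝ) ≤ 0 := by exact_mod_cast Int.lt_add_one_iff.1 (by simpa using hlt)
    nlinarith
  · rw [heq] at hn2; push_cast at hn2; linarith
  · have : (2:ℝ) ≤ n := by exact_mod_cast hgt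
    nlinarith

/-- A continuous function which is real-nonnegative away from the fiber of `ζ`
is so everywhere. -/
lemma cont_extend (g : ℝ → ℂ) (hg : Continuous g) (ζ : ℂ)
    (h : ∀ x : ℝ, cexpI x ≠ ζ → (g x).im = 0 ∧ 0 ≤ (g x).re) :
    ∀ x : ℝ, (g x).im = 0 ∧ 0 ≤ (g x).re := by
  intro x₀
  by_cases hx : cexpI x₀ = ζ
  swap
  · exact h x₀ hx
  have hev : ∀ᶠ x in nhdsWithin x₀ (Set.Ioi x₀), (g x).im = 0 ∧ 0 ≤ (g x).re := by
    filter_upwards [(Ioo_mem_nhdsGT_of_mem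
      (Set.mem_Ico.2 ⟨le_refl x₀, by linarith [Real.pi_pos]⟩) : Set.Ioo x₀ (x₀ + 2*Real.pi) ∈ nhdsWithin x₀ (Set.Ioi x₀))] with x hxm
    exact h x (by rw [← hx]; exact cexpI_ne_of_Ioo hxm)
  have htend : Filter.Tendsto g (nhdsWithin x₀ (Set.Ioi x₀)) (nhds (g x₀)) :=
    (hg.continuousAt).continuousWithinAt
  constructor
  · have h1 : Filter.Tendsto (fun x => (g x).im) (nhdsWithin x₀ (Set.Ioi x₀)) (nhds ((g x₀).im)) :=
      (Complex.continuous_im.continuousAt).tendsto.comp htend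
    exact tendsto_nhds_unique h1 (Filter.Tendsto.congr' (by filter_upwards [hev] with x hx2; exact hx2.1.symm) tendsto_const_nhds)
  · have h1 : Filter.Tendsto (fun x => (g x).re) (nhdsWithin x₀ (Set.Ioi x₀)) (nhds ((g x₀).re)) :=
      (Complex.continuous_re.continuousAt).tendsto.comp htend
    exact ge_of_tendsto h1 (by filter_upwards [hev] with x hx2; exact hx2.2)

lemma two_I_helper (c d : ℂ) : 2*Complex.I*((c - d)*Complex.I/2) = d - c := by
  have h := Complex.I_mul_I
  linear_combination (c - d) * h

lemma cexpI_sub_cexpI (x t : ℝ) :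
    cexpI x - cexpI t = cexpI ((x+t)/2) * (2*Complex.I*((Real.sin ((x-t)/2) : ℝ) : ℂ)) := by
  rw [Complex.ofReal_sin, Complex.sin, two_I_helper]
  have h1 : cexpI ((x+t)/2) * Complex.exp (((x-t)/2 : ℝ) * Complex.I) = cexpI x := by
    rw [cexpI, cexpI, ← Complex.exp_add]; congr 1; push_cast; ring
  have h2 : cexpI ((x+t)/2) * Complex.exp (-(((x-t)/2 : ℝ):ℂ) * Complex.I) = cexpI t := by
    rw [cexpI, cexpI, ← Complex.exp_add]; congr 1; push_cast; ring
  linear_combination h2 - h1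


lemma fr_symm (L : ℕ) (q : Polynomial ℂ) (hdeg : q.natDegree ≤ 2*L)
    (him : ∀ x : ℝ, (fval L q x).im = 0) : conjReflect (2*L) q = q := by
  rw [← sub_eq_zero]
  apply poly_eq_zero_of_circle
  intro x
  rw [Polynomial.eval_sub, conjReflect_eval_circle _ _ hdeg, sub_eq_zero]
  have h1 : (starRingEnd ℂ) (fval L q x) = fval L q x :=
    Complex.conj_eq_iff_im.2 (him x)
  unfold fval at h1
  rw [map_mul, conj_cexpI, neg_neg] at h1
  have e1 : cexpI (((2*L:ℕ) : ℝ)*x) = cexpI ((L:ℝ)*x) * cexpI ((L:ℝ)*x) := by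
    rw [← cexpI_add]; congr 1; push_cast; ring
  have e2 : cexpI ((L:ℝ)*x) * cexpI (-((L:ℝ)*x)) = 1 := by
    rw [← cexpI_add]; simp [cexpI]
  calc cexpI (((2*L:ℕ):ℝ) * x) * (starRingEnd ℂ) (q.eval (cexpI x))
      = cexpI ((L:ℝ)*x) * (cexpI ((L:ℝ)*x) * (starRingEnd ℂ) (q.eval (cexpI x))) := by
        rw [e1, mul_assoc]
    _ = cexpI ((L:ℝ)*x) * (cexpI (-((L:ℝ)*x)) * q.eval (cexpI x)) := by rw [h1]
    _ = q.eval (cexpI x) := by rw [← mul_assoc, e2, one_mul]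

/-- a simple circle root of a nonnegative real trig polynomial is impossible -/
lemma no_simple_circle_root (L : ℕ) (q r : Polynomial ℂ) (t : ℝ)
    (hfact : q = (X - C (cexpI t)) * r)
    (hcond : ∀ x : ℝ, (fval L q x).im = 0 ∧ 0 ≤ (fval L q x).re)
    (hrt : r.eval (cexpI t) ≠ 0) : False := by
  set g : ℝ → ℂ := fun x =>
    cexpI ((x+t)/2 - L*x) * (2*Complex.I*r.eval (cexpI x)) with hg
  have hgcont : Continuous g := by unfold g; unfold cexpI; fun_prop
  have hkey : ∀ x : ℝ, fval L q x = ((Real.sin ((x-t)/2) : ℝ) : ℂ) * g x := by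
    intro x
    rw [fval, hfact, Polynomial.eval_mul, Polynomial.eval_sub, Polynomial.eval_X,
      Polynomial.eval_C, cexpI_sub_cexpI x t, hg]
    have : cexpI (-(L*x)) * cexpI ((x+t)/2) = cexpI ((x+t)/2 - L*x) := by
      rw [← cexpI_add]; congr 1; ring
    calc cexpI (-(↑L*x)) * (cexpI ((x+t)/2) * (2*Complex.I*((Real.sin ((x-t)/2):ℝ):ℂ)) * r.eval (cexpI x))
        = ((Real.sin ((x-t)/2):ℝ):ℂ) * ((cexpI (-(L*x)) * cexpI ((x+t)/2)) * (2*Complex.I*r.eval (cexpI x))) := by ring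
      _ = _ := by rw [this]
  have hgt : g t ≠ 0 := by
    unfold g
    exact mul_ne_zero (cexpI_ne_zero _) (mul_ne_zero (by norm_num [Complex.I_ne_zero]) hrt)
  -- from the right: g real ≥ 0 ; from the left: g real ≤ 0
  have hcont : Filter.Tendsto g (nhdsWithin t (Set.Ioi t)) (nhds (g t)) :=
    (hgcont.continuousAt).continuousWithinAt
  have hcontL : Filter.Tendsto g (nhdsWithin t (Set.Iio t)) (nhds (g t)) :=
    (hgcont.continuousAt).continuousWithinAt
  have hpi := Real.pi_pos
  have hevR : ∀ᶠ x in nhdsWithin t (Set.Ioi t), (g x).im = 0 ∧ 0 ≤ (g x).re := by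
    filter_upwards [(Ioo_mem_nhdsGT_of_mem
      (Set.mem_Ico.2 ⟨le_refl t, by linarith⟩) : Set.Ioo t (t + 2*Real.pi) ∈ nhdsWithin t (Set.Ioi t))] with x hxm
    have hs : 0 < Real.sin ((x-t)/2) := by
      apply Real.sin_pos_of_pos_of_lt_pi <;> [linarith [hxm.1]; linarith [hxm.2]]
    have h1 := (hcond x).1
    have h2 := (hcond x).2
    rw [hkey x] at h1 h2
    simp only [Complex.mul_im, Complex.mul_re, Complex.ofReal_im, Complex.ofReal_re,
      zero_mul, mul_zero, add_zero, sub_zero, zero_add] at h1 h2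
    constructor
    · exact (mul_eq_zero.1 h1).resolve_left (ne_of_gt hs)
    · nlinarith
  have hevL : ∀ᶠ x in nhdsWithin t (Set.Iio t), (g x).im = 0 ∧ (g x).re ≤ 0 := by
    filter_upwards [Ioo_mem_nhdsLT_of_mem (a := t - 2*Real.pi) (c := t)
      (Set.mem_Ioc.2 ⟨by linarith, le_refl t⟩)] with x hxm
    have hs : Real.sin ((x-t)/2) < 0 := by
      have : Real.sin ((x-t)/2) = - Real.sin (-((x-t)/2)) := by rw [Real.sin_neg]; ring
      rw [this, neg_lt, neg_zero]
      apply Real.sin_pos_of_pos_of_lt_pi <;> [linarith [hxm.2]; linarith [hxm.1]]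
    have h1 := (hcond x).1
    have h2 := (hcond x).2
    rw [hkey x] at h1 h2
    simp only [Complex.mul_im, Complex.mul_re, Complex.ofReal_im, Complex.ofReal_re,
      zero_mul, mul_zero, add_zero, sub_zero, zero_add] at h1 h2
    constructor
    · exact (mul_eq_zero.1 h1).resolve_left (ne_of_lt hs)
    · nlinarith
  apply hgt
  have him : (g t).im = 0 := by
    have h1 : Filter.Tendsto (fun x => (g x).im) (nhdsWithin t (Set.Ioi t)) (nhds ((g t).im)) :=
      (Complex.continuous_im.continuousAt).tendsto.comp hcont
    exact tendsto_nhds_unique h1 (Filter.Tendsto.congr'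
      (by filter_upwards [hevR] with x hx2; exact hx2.1.symm) tendsto_const_nhds)
  have hre1 : 0 ≤ (g t).re := by
    have h1 : Filter.Tendsto (fun x => (g x).re) (nhdsWithin t (Set.Ioi t)) (nhds ((g t).re)) :=
      (Complex.continuous_re.continuousAt).tendsto.comp hcont
    exact ge_of_tendsto h1 (by filter_upwards [hevR] with x hx2; exact hx2.2)
  have hre2 : (g t).re ≤ 0 := by
    have h1 : Filter.Tendsto (fun x => (g x).re) (nhdsWithin t (Set.Iio t)) (nhds ((g t).re)) :=
      (Complex.continuous_re.continuousAt).tendsto.comp hcontL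
    exact le_of_tendsto h1 (by filter_upwards [hevL] with x hx2; exact hx2.2)
  exact Complex.ext (le_antisymm hre2 hre1) him


theorem fejer_riesz : ∀ (L : ℕ) (q : Polynomial ℂ), q.natDegree ≤ 2*L →
    (∀ x : ℝ, (fval L q x).im = 0 ∧ 0 ≤ (fval L q x).re) →
    ∃ p : Polynomial ℂ, p.natDegree ≤ L ∧
      ∀ x : ℝ, fval L q x = ((‖p.eval (cexpI x)‖^2 : ℝ) : ℂ) := by
  intro L
  induction L with
  | zero =>
    intro q hdeg hcond
    have hq : q = C (q.coeff 0) := (Polynomial.eq_C_of_natDegree_le_zero (by simpa using hdeg))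
    have h0 := hcond 0
    have hval : ∀ x : ℝ, fval 0 q x = q.coeff 0 := by
      intro x
      rw [fval, hq]
      simp [cexpI]
    refine ⟨C (Real.sqrt ((q.coeff 0).re) : ℂ), by simp, fun x => ?_⟩
    rw [hval]
    rw [hval 0] at h0
    have hre : q.coeff 0 = ((q.coeff 0).re : ℂ) := (Complex.conj_eq_iff_re.1 (Complex.conj_eq_iff_im.2 h0.1)).symm
    simp only [Polynomial.eval_C]
    have hn : ‖((Real.sqrt ((q.coeff 0).re) : ℝ) : ℂ)‖ = Real.sqrt ((q.coeff 0).re) := by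
      rw [Complex.norm_real, Real.norm_eq_abs]
      exact _root_.abs_of_nonneg (Real.sqrt_nonneg _)
    rw [hn, Real.sq_sqrt h0.2, ← hre]
  | succ l ih =>
    intro q hdeg hcond
    by_cases hq0 : q = 0
    · exact ⟨0, by simp, fun x => by simp [hq0, fval]⟩
    have hsym := fr_symm (l+1) q hdeg (fun x => (hcond x).1)
    by_cases hc0 : q.coeff 0 = 0
    · -- q = X * r, reduce degree
      have htop : q.coeff (2*(l+1)) = 0 := by
        have := conjReflect_coeff (2*(l+1)) q (2*(l+1)) (le_refl _)
        rw [hsym] at this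
        rw [this, Nat.sub_self, hc0, map_zero]
      have hdeg' : q.natDegree ≤ 2*(l+1) - 1 := by
        rcases Nat.lt_or_ge q.natDegree (2*(l+1)) with h | h
        · omega
        · have : q.natDegree = 2*(l+1) := le_antisymm hdeg h
          exfalso
          exact hq0 (Polynomial.leadingCoeff_eq_zero.1 (by rw [Polynomial.leadingCoeff, this]; exact htop))
      set r := q.divX with hr
      have hqr : q = X * r := by
        have := Polynomial.X_mul_divX_add q
        rw [hc0, map_zero, add_zero] at this
        exact this.symm
      have hrdeg : r.natDegree ≤ 2*l := by
        apply Polynomial.natDegree_le_iff_coeff_eq_zero.2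
        intro N hN
        rw [hr, Polynomial.coeff_divX]
        apply Polynomial.natDegree_le_iff_coeff_eq_zero.1 hdeg'
        omega
      have hfv : ∀ x : ℝ, fval l r x = fval (l+1) q x := by
        intro x
        rw [fval, fval, hqr, Polynomial.eval_mul, Polynomial.eval_X]
        rw [show cexpI (-((l:ℝ)*x)) = cexpI (-(((l+1:ℕ):ℝ)*x)) * cexpI x by
          rw [← cexpI_add]; congr 1; push_cast; ring]
        ring
      obtain ⟨p, hp1, hp2⟩ := ih r hrdeg (fun x => by rw [hfv x]; exact hcond x)
      exact ⟨p, le_trans hp1 (by omega), fun x => by rw [← hfv x]; exact hp2 x⟩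
    · -- q has nonzero constant coefficient
      have htop : q.coeff (2*(l+1)) = (starRingEnd ℂ) (q.coeff 0) := by
        have := conjReflect_coeff (2*(l+1)) q (2*(l+1)) (le_refl _)
        rw [hsym] at this
        rw [this, Nat.sub_self]
      have hdeg_eq : q.natDegree = 2*(l+1) := by
        refine le_antisymm hdeg (Polynomial.le_natDegree_of_ne_zero ?_)
        rw [htop]
        simpa using hc0
      have hdegpos : 0 < q.degree := Polynomial.natDegree_pos_iff_degree_pos.1 (by omega)
      obtain ⟨ζ, hζroot⟩ := Complex.exists_root hdegpos
      have hζ0 : ζ ≠ 0 := by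
        intro h0
        apply hc0
        rw [Polynomial.coeff_zero_eq_eval_zero]
        subst h0
        exact hζroot
      set ζc := (starRingEnd ℂ) ζ with hζc
      have hζc0 : ζc ≠ 0 := by simpa [hζc] using hζ0
      set μ := ζc⁻¹ with hμ
      have hμ0 : μ ≠ 0 := inv_ne_zero hζc0
      have hμroot : q.eval μ = 0 := by
        have hcr := conjReflect_eval (2*(l+1)) q hdeg μ hμ0
        rw [hsym] at hcr
        have hconjμ : ((starRingEnd ℂ) μ)⁻¹ = ζ := by
          rw [hμ, map_inv₀, inv_inv, hζc, Complex.conj_conj]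
        rw [hcr, hconjμ, hζroot.eq_zero, map_zero, mul_zero]
      have hfact : ∃ r : Polynomial ℂ, q = (X - C ζ) * (X - C μ) * r := by
        by_cases hμζ : μ = ζ
        · obtain ⟨r, hr⟩ := Polynomial.dvd_iff_isRoot.2 hζroot
          by_cases hrz : r.eval ζ = 0
          · obtain ⟨r2, hr2⟩ := Polynomial.dvd_iff_isRoot.2 hrz
            exact ⟨r2, by rw [hμζ, hr, hr2]; ring⟩
          · exfalso
            have habs : ‖ζ‖ = 1 := by
              have h1 : ζ * ζc = 1 := by
                rw [hζc]
                have : ζc = ζ⁻¹ := by rw [← inv_inv ζc, ← hμ, hμζ]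
                rw [hζc] at this
                rw [this]
                exact mul_inv_cancel₀ hζ0
              have := Complex.mul_conj' ζ
              rw [← hζc, h1] at this
              have h2 : (‖ζ‖:ℝ)^2 = 1 := by exact_mod_cast this.symm
              nlinarith [norm_nonneg ζ]
            have hζexp : ζ = cexpI (ζ.arg) := by
              have h3 := Complex.norm_mul_exp_arg_mul_I ζ
              rw [habs, Complex.ofReal_one, one_mul] at h3
              rw [cexpI, mul_comm Complex.I]
              exact h3.symm
            exact no_simple_circle_root (l+1) q r ζ.arg (by rw [← hζexp]; exact hr)
              hcond (by rw [← hζexp]; exact hrz)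
        · have hne : μ - ζ ≠ 0 := sub_ne_zero.2 hμζ
          have hco : IsCoprime (X - C ζ) (X - C μ) := by
            refine ⟨C ((μ - ζ)⁻¹), -C ((μ - ζ)⁻¹), ?_⟩
            have h4 : C ((μ - ζ)⁻¹) * (X - C ζ) + -C ((μ - ζ)⁻¹) * (X - C μ)
                = C ((μ - ζ)⁻¹ * (μ - ζ)) := by
              rw [C_mul, C_sub]; ring
            rw [h4, inv_mul_cancel₀ hne, C_1]
          obtain ⟨r, hr⟩ := hco.mul_dvd (Polynomial.dvd_iff_isRoot.2 hζroot)
            (Polynomial.dvd_iff_isRoot.2 hμroot)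
          exact ⟨r, hr⟩
      obtain ⟨r, hfac⟩ := hfact
      have hXζ : (X - C ζ) ≠ 0 := Polynomial.X_sub_C_ne_zero ζ
      have hXμ : (X - C μ) ≠ 0 := Polynomial.X_sub_C_ne_zero μ
      have hrne : r ≠ 0 := by intro h; apply hq0; rw [hfac, h, mul_zero]
      have hrdeg : r.natDegree = 2*l := by
        have h5 : q.natDegree = ((X - C ζ) * (X - C μ)).natDegree + r.natDegree := by
          rw [hfac] at hdeg_eq ⊢
          exact Polynomial.natDegree_mul (mul_ne_zero hXζ hXμ) hrne
        rw [Polynomial.natDegree_mul hXζ hXμ, Polynomial.natDegree_X_sub_C,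
          Polynomial.natDegree_X_sub_C] at h5
        omega
      set q' : Polynomial ℂ := C (-μ) * r with hq'
      have hkey : ∀ x : ℝ, fval (l+1) q x = ((‖cexpI x - ζ‖^2 : ℝ) : ℂ) * fval l q' x := by
        intro x
        set z := cexpI x with hz
        have hz1 : z * (starRingEnd ℂ) z = 1 := cexpI_mul_conj x
        have hμζc : μ * ζc = 1 := inv_mul_cancel₀ hζc0
        have hprod : (z - ζ) * (z - μ) = ((z - ζ) * (starRingEnd ℂ) (z - ζ)) * (-μ) * z := by
          rw [map_sub, ← hζc]
          linear_combination (z - ζ) * μ * hz1 - (z - ζ) * z * hμζc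
        have hzc : cexpI (-(((l+1:ℕ)):ℝ) * x) * z = cexpI (-((l:ℝ)*x)) := by
          rw [hz, ← cexpI_add]; congr 1; push_cast; ring
        calc fval (l+1) q x
            = (z - ζ) * (z - μ) * (cexpI (-((((l+1):ℕ)):ℝ) * x) * r.eval z) := by
              rw [fval, hfac]
              simp only [Polynomial.eval_mul, Polynomial.eval_sub, Polynomial.eval_X,
                Polynomial.eval_C, ← hz]
              push_cast
              ring
          _ = ((z - ζ) * (starRingEnd ℂ) (z - ζ)) * ((-μ) * (cexpI (-((((l+1):ℕ)):ℝ) * x) * z) * r.eval z) := by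
              rw [hprod]; ring
          _ = ((‖z - ζ‖^2 : ℝ) : ℂ) * ((-μ) * cexpI (-((l:ℝ)*x)) * r.eval z) := by
              rw [Complex.mul_conj', hzc]
              push_cast
              ring
          _ = ((‖z - ζ‖^2 : ℝ) : ℂ) * fval l q' x := by
              rw [fval, hq']
              simp only [Polynomial.eval_mul, Polynomial.eval_C, ← hz]
              ring
      have hcond' : ∀ x : ℝ, (fval l q' x).im = 0 ∧ 0 ≤ (fval l q' x).re := by
        apply cont_extend _ (fval_continuous _ _) ζ
        intro x hxζ
        have hpos : 0 < ‖cexpI x - ζ‖^2 := by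
          have : cexpI x - ζ ≠ 0 := sub_ne_zero.2 hxζ
          exact pow_pos (norm_pos_iff.mpr this) 2
        have h1 := (hcond x).1
        have h2 := (hcond x).2
        rw [hkey x] at h1 h2
        simp only [Complex.mul_im, Complex.mul_re, Complex.ofReal_im, Complex.ofReal_re,
          zero_mul, mul_zero, add_zero, sub_zero, zero_add] at h1 h2
        constructor
        · exact (mul_eq_zero.1 h1).resolve_left (ne_of_gt hpos)
        · nlinarith
      have hq'deg : q'.natDegree ≤ 2*l := by
        rw [hq']
        exact le_trans (Polynomial.natDegree_C_mul_le _ _) (le_of_eq hrdeg)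
      obtain ⟨p₁, hp₁d, hp₁⟩ := ih q' hq'deg hcond'
      refine ⟨(X - C ζ) * p₁, ?_, fun x => ?_⟩
      · refine le_trans (Polynomial.natDegree_mul_le) ?_
        rw [Polynomial.natDegree_X_sub_C]
        omega
      · rw [hkey x, hp₁ x]
        rw [Polynomial.eval_mul, Polynomial.eval_sub, Polynomial.eval_X, Polynomial.eval_C]
        rw [norm_mul, mul_pow]
        push_cast
        ring

lemma Rz_eq (s : ℝ) : Rz s = !![cexpI (-(s/2)), 0; 0, cexpI (s/2)] := by
  have h1 : Complex.exp (-(Complex.I * s / 2)) = cexpI (-(s/2)) := by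
    rw [cexpI]; congr 1; push_cast; ring
  have h2 : Complex.exp (Complex.I * s / 2) = cexpI (s/2) := by
    rw [cexpI]; congr 1; push_cast; ring
  rw [Rz, h1, h2]

lemma Rz_add (s t : ℝ) : Rz s * Rz t = Rz (s + t) := by
  have h1 : cexpI (-(s/2)) * cexpI (-(t/2)) = cexpI (-((s+t)/2)) := by
    rw [← cexpI_add]; congr 1; ring
  have h2 : cexpI (s/2) * cexpI (t/2) = cexpI ((s+t)/2) := by
    rw [← cexpI_add]; congr 1; ring
  rw [Rz_eq, Rz_eq, Rz_eq, Matrix.mul_fin_two]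
  simp only [mul_zero, zero_mul, add_zero, zero_add, h1, h2]

lemma Rz_zero : Rz 0 = 1 := by
  rw [Rz_eq, Matrix.one_fin_two]
  norm_num [cexpI]

lemma polar_pos (w : ℂ) : ((‖w‖ : ℝ) : ℂ) * cexpI w.arg = w := by
  rw [cexpI, mul_comm Complex.I]
  exact Complex.norm_mul_exp_arg_mul_I w

lemma polar_neg (w : ℂ) : ((‖w‖ : ℝ) : ℂ) * cexpI (-w.arg) = (starRingEnd ℂ) w := by
  have := congrArg (starRingEnd ℂ) (polar_pos w)
  rw [map_mul, Complex.conj_ofReal, conj_cexpI] at this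
  exact this

lemma euler (a b : ℂ) (h : ‖a‖^2 + ‖b‖^2 = 1) :
    ∃ ω θ φ : ℝ, Rz ω * Ry θ * Rz φ =
      !![a, -b; (starRingEnd ℂ) b, (starRingEnd ℂ) a] := by
  refine ⟨-(a.arg + b.arg), 2 * Real.arccos ‖a‖, -a.arg + b.arg, ?_⟩
  have ha1 : ‖a‖ ≤ 1 := by nlinarith [norm_nonneg a, norm_nonneg b, sq_nonneg ‖b‖]
  have hcos : Real.cos (2 * Real.arccos ‖a‖ / 2) = ‖a‖ := by
    rw [show 2 * Real.arccos ‖a‖ / 2 = Real.arccos ‖a‖ by ring]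
    exact Real.cos_arccos (by linarith [norm_nonneg a]) ha1
  have hsin : Real.sin (2 * Real.arccos ‖a‖ / 2) = ‖b‖ := by
    rw [show 2 * Real.arccos ‖a‖ / 2 = Real.arccos ‖a‖ by ring, Real.sin_arccos,
      show 1 - ‖a‖^2 = ‖b‖^2 by linarith]
    exact Real.sqrt_sq (norm_nonneg b)
  rw [Rz_eq, Rz_eq, Ry, hcos, hsin, Matrix.mul_fin_two, Matrix.mul_fin_two]
  have key : ∀ (u v : ℝ) (w : ℂ), u + v = w.arg →
      cexpI u * ((‖w‖ : ℝ) : ℂ) * cexpI v = w := by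
    intro u v w huv
    rw [mul_comm (cexpI u), mul_assoc, ← cexpI_add, huv, polar_pos]
  have keyn : ∀ (u v : ℝ) (w : ℂ), u + v = -w.arg →
      cexpI u * ((‖w‖ : ℝ) : ℂ) * cexpI v = (starRingEnd ℂ) w := by
    intro u v w huv
    rw [mul_comm (cexpI u), mul_assoc, ← cexpI_add, huv, polar_neg]
  ext i j
  fin_cases i <;> fin_cases j <;>
    simp only [Matrix.cons_val', Matrix.cons_val_zero, Matrix.cons_val_one, Matrix.head_cons,
      Matrix.empty_val', Matrix.cons_val_fin_one, Matrix.head_fin_const, mul_zero, zero_mul,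
      add_zero, zero_add, neg_zero, mul_neg, neg_mul, neg_neg]
  · exact key _ _ a (by ring)
  · exact congrArg Neg.neg (key _ _ b (by ring))
  · exact keyn _ _ b (by ring)
  · exact keyn _ _ a (by ring)


lemma Wqsp_zero (ω : ℝ) (θ φ : ℕ → ℝ) (x : ℝ) :
    Wqsp 0 ω θ φ x = Rz ω * Ry (θ 0) * Rz (φ 0) := by
  unfold Wqsp
  simp

lemma Wqsp_omega (L : ℕ) (ω : ℝ) (θ φ : ℕ → ℝ) (x : ℝ) :
    Wqsp L ω θ φ x = Rz ω * Wqsp L 0 θ φ x := by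
  unfold Wqsp
  rw [Rz_zero]
  simp only [one_mul, mul_assoc]

lemma Wqsp_succ (L : ℕ) (ω : ℝ) (θ φ : ℕ → ℝ) (x : ℝ) :
    Wqsp (L+1) ω θ φ x =
      Rz ω * Ry (θ 0) * Rz (φ 0) * Rz x * Wqsp L 0 (θ ∘ Nat.succ) (φ ∘ Nat.succ) x := by
  unfold Wqsp
  rw [List.range_succ_eq_map, List.map_cons, List.prod_cons, List.map_map, Rz_zero]
  simp only [Function.comp_def, Nat.succ_eq_add_one, one_mul, mul_assoc]

/-- top coefficient of `A * conjReflect n B` -/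
lemma coeff_mul_reflect_top (n : ℕ) (A B : Polynomial ℂ) (hA : A.natDegree ≤ n) :
    (A * conjReflect n B).coeff (2*n) = A.coeff n * (starRingEnd ℂ) (B.coeff 0) := by
  rw [Polynomial.coeff_mul]
  rw [Finset.sum_eq_single ((n : ℕ), (n : ℕ))]
  · rw [conjReflect_coeff n B n (le_refl n), Nat.sub_self]
  · rintro ⟨i, j⟩ hb hbne
    have hij : i + j = 2*n := Finset.HasAntidiagonal.mem_antidiagonal.1 hb
    rcases Nat.lt_or_ge n i with h | h
    · rw [Polynomial.natDegree_le_iff_coeff_eq_zero.1 hA i h, zero_mul]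
    · have : n < j := by
        rcases Nat.lt_or_ge n j with h' | h'
        · exact h'
        · exfalso; apply hbne
          have : i = n ∧ j = n := by omega
          simp [this.1, this.2]
      rw [conjReflect_coeff_gt n B j this, mul_zero]
  · intro hnot
    exact absurd (Finset.HasAntidiagonal.mem_antidiagonal.2 (by omega)) hnot

lemma coeff_orth (n : ℕ) (hn : 0 < n) (P Q : Polynomial ℂ)
    (hP : P.natDegree ≤ n) (hQ : Q.natDegree ≤ n)
    (hnorm : ∀ x : ℝ, ‖P.eval (cexpI x)‖^2 + ‖Q.eval (cexpI x)‖^2 = 1) :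
    P.coeff n * (starRingEnd ℂ) (P.coeff 0) + Q.coeff n * (starRingEnd ℂ) (Q.coeff 0) = 0 := by
  have hpoly : P * conjReflect n P + Q * conjReflect n Q - X^n = 0 := by
    apply poly_eq_zero_of_circle
    intro x
    rw [Polynomial.eval_sub, Polynomial.eval_add, Polynomial.eval_mul, Polynomial.eval_mul,
      Polynomial.eval_pow, Polynomial.eval_X, conjReflect_eval_circle n P hP,
      conjReflect_eval_circle n Q hQ, cexpI_pow]
    have e1 := Complex.mul_conj' (P.eval (cexpI x))
    have e2 := Complex.mul_conj' (Q.eval (cexpI x))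
    have e3 : ((‖P.eval (cexpI x)‖ : ℂ))^2 + ((‖Q.eval (cexpI x)‖ : ℂ))^2 = 1 := by
      exact_mod_cast hnorm x
    linear_combination cexpI ((n:ℝ)*x) * e1 + cexpI ((n:ℝ)*x) * e2 + cexpI ((n:ℝ)*x) * e3
  have hco := congrArg (fun p => Polynomial.coeff p (2*n)) hpoly
  simp only [Polynomial.coeff_sub, Polynomial.coeff_add, Polynomial.coeff_zero,
    Polynomial.coeff_X_pow] at hco
  rw [coeff_mul_reflect_top n P P hP, coeff_mul_reflect_top n Q Q hQ] at hco
  have h2n : ¬(2*n = n) := by omega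
  simp only [h2n, if_false, sub_zero] at hco
  exact hco


lemma unit_pair (u v : ℂ) (h : ¬(u = 0 ∧ v = 0)) :
    ∃ s : ℝ, s ≠ 0 ∧
      (u/(s:ℂ)) * (starRingEnd ℂ) (u/(s:ℂ)) + (v/(s:ℂ)) * (starRingEnd ℂ) (v/(s:ℂ)) = 1 := by
  have hpos : 0 < ‖u‖^2 + ‖v‖^2 := by
    rcases not_and_or.1 h with hu | hv
    · have := norm_pos_iff.2 hu; nlinarith [sq_nonneg ‖v‖, norm_nonneg v]
    · have := norm_pos_iff.2 hv; nlinarith [sq_nonneg ‖u‖, norm_nonneg u]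
  set s := Real.sqrt (‖u‖^2 + ‖v‖^2) with hsdef
  have hspos : 0 < s := Real.sqrt_pos.2 hpos
  refine ⟨s, ne_of_gt hspos, ?_⟩
  have hs2 : s * s = ‖u‖^2 + ‖v‖^2 := Real.mul_self_sqrt hpos.le
  rw [map_div₀, map_div₀, Complex.conj_ofReal, div_mul_div_comm, div_mul_div_comm,
    ← add_div, Complex.mul_conj', Complex.mul_conj']
  have hcast : ((s:ℂ) * (s:ℂ)) = ((‖u‖:ℂ))^2 + ((‖v‖:ℂ))^2 := by
    have : ((s*s : ℝ) : ℂ) = ((‖u‖^2 + ‖v‖^2 : ℝ) : ℂ) := by rw [hs2]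
    push_cast at this
    push_cast
    exact this
  rw [hcast]
  apply div_self
  rw [← hcast]
  push_cast
  exact mul_ne_zero (by exact_mod_cast ne_of_gt hspos) (by exact_mod_cast ne_of_gt hspos)

theorem qsp_synth : ∀ (L : ℕ) (P Q : Polynomial ℂ), P.natDegree ≤ L → Q.natDegree ≤ L →
    (∀ x : ℝ, ‖P.eval (cexpI x)‖^2 + ‖Q.eval (cexpI x)‖^2 = 1) →
    ∃ (ω : ℝ) (θ φ : ℕ → ℝ), ∀ x : ℝ,
      (Wqsp L ω θ φ x) 0 0 = cexpI (-((L:ℝ) * x)/2) * P.eval (cexpI x) ∧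
      (Wqsp L ω θ φ x) 1 0 = cexpI (-((L:ℝ) * x)/2) * Q.eval (cexpI x) := by
  intro L
  induction L with
  | zero =>
    intro P Q hP hQ hnorm
    have hPc : P = C (P.coeff 0) := Polynomial.eq_C_of_natDegree_le_zero (by simpa using hP)
    have hQc : Q = C (Q.coeff 0) := Polynomial.eq_C_of_natDegree_le_zero (by simpa using hQ)
    have h1 : ‖P.coeff 0‖^2 + ‖(starRingEnd ℂ) (Q.coeff 0)‖^2 = 1 := by
      have := hnorm 0
      rw [hPc, hQc] at this
      simp only [Polynomial.eval_C] at this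
      rw [RCLike.norm_conj]
      exact this
    obtain ⟨ω, θ0, φ0, heu⟩ := euler (P.coeff 0) ((starRingEnd ℂ) (Q.coeff 0)) h1
    refine ⟨ω, fun _ => θ0, fun _ => φ0, fun x => ?_⟩
    rw [Wqsp_zero, heu]
    have hzexp : cexpI (-(((0:ℕ):ℝ) * x)/2) = 1 := by
      norm_num [cexpI, Complex.exp_zero]
    rw [hzexp]
    constructor
    · rw [hPc]; simp
    · rw [hQc]; simp [Complex.conj_conj]
  | succ l ih =>
    intro P Q hP hQ hnorm
    have hrel := coeff_orth (l+1) (Nat.succ_pos l) P Q hP hQ hnorm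
    have hchoice : ∃ α β : ℂ, α * (starRingEnd ℂ) α + β * (starRingEnd ℂ) β = 1 ∧
        α * P.coeff (l+1) + β * Q.coeff (l+1) = 0 ∧
        (starRingEnd ℂ) α * Q.coeff 0 - (starRingEnd ℂ) β * P.coeff 0 = 0 := by
      by_cases h0 : P.coeff 0 = 0 ∧ Q.coeff 0 = 0
      · by_cases hL : P.coeff (l+1) = 0 ∧ Q.coeff (l+1) = 0
        · exact ⟨1, 0, by simp, by simp [hL.1, hL.2], by simp [h0.1, h0.2]⟩
        · obtain ⟨s, hs, hunit⟩ := unit_pair (Q.coeff (l+1)) (-(P.coeff (l+1)))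
            (by intro hc; exact hL ⟨by simpa using hc.2, hc.1⟩)
          refine ⟨Q.coeff (l+1)/(s:ℂ), -(P.coeff (l+1))/(s:ℂ), hunit, by ring, by
            simp [h0.1, h0.2]⟩
      · obtain ⟨s, hs, hunit⟩ := unit_pair ((starRingEnd ℂ) (P.coeff 0)) ((starRingEnd ℂ) (Q.coeff 0))
          (by intro hc; exact h0 ⟨by simpa using hc.1, by simpa using hc.2⟩)
        refine ⟨(starRingEnd ℂ) (P.coeff 0)/(s:ℂ), (starRingEnd ℂ) (Q.coeff 0)/(s:ℂ), hunit, ?_, ?_⟩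
        · rw [div_mul_eq_mul_div, div_mul_eq_mul_div, ← add_div]
          rw [show (starRingEnd ℂ) (P.coeff 0) * P.coeff (l+1) + (starRingEnd ℂ) (Q.coeff 0) * Q.coeff (l+1)
              = P.coeff (l+1) * (starRingEnd ℂ) (P.coeff 0) + Q.coeff (l+1) * (starRingEnd ℂ) (Q.coeff 0) by ring,
            hrel, zero_div]
        · rw [map_div₀, map_div₀, Complex.conj_ofReal, Complex.conj_conj, Complex.conj_conj]
          field_simp
          ring
    obtain ⟨α, β, hαβ, hc1, hc2⟩ := hchoice
    set P' : Polynomial ℂ := C α * P + C β * Q with hP'def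
    set S : Polynomial ℂ := C (-((starRingEnd ℂ) β)) * P + C ((starRingEnd ℂ) α) * Q with hSdef
    have hS0 : S.coeff 0 = 0 := by
      rw [hSdef, Polynomial.coeff_add, Polynomial.coeff_C_mul, Polynomial.coeff_C_mul]
      linear_combination hc2
    set Q' : Polynomial ℂ := S.divX with hQ'def
    have hSX : X * Q' = S := by
      have h := Polynomial.X_mul_divX_add S
      rw [hS0, map_zero, add_zero] at h
      rw [hQ'def]
      exact h
    have hP'deg : P'.natDegree ≤ l := by
      apply Polynomial.natDegree_le_iff_coeff_eq_zero.2
      intro N hN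
      rw [hP'def, Polynomial.coeff_add, Polynomial.coeff_C_mul, Polynomial.coeff_C_mul]
      rcases Nat.lt_or_ge (l+1) N with h | h
      · rw [Polynomial.natDegree_le_iff_coeff_eq_zero.1 hP N h,
          Polynomial.natDegree_le_iff_coeff_eq_zero.1 hQ N h, mul_zero, mul_zero, add_zero]
      · have hNe : N = l+1 := by omega
        rw [hNe]
        exact hc1
    have hSdeg : S.natDegree ≤ l+1 := by
      rw [hSdef]
      refine le_trans (Polynomial.natDegree_add_le _ _) (max_le ?_ ?_)
      · exact le_trans (Polynomial.natDegree_C_mul_le _ _) hP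
      · exact le_trans (Polynomial.natDegree_C_mul_le _ _) hQ
    have hQ'deg : Q'.natDegree ≤ l := by
      apply Polynomial.natDegree_le_iff_coeff_eq_zero.2
      intro N hN
      rw [hQ'def, Polynomial.coeff_divX]
      exact Polynomial.natDegree_le_iff_coeff_eq_zero.1 hSdeg (N+1) (by omega)
    have hP'z : ∀ x : ℝ, P'.eval (cexpI x) = α * P.eval (cexpI x) + β * Q.eval (cexpI x) := by
      intro x; rw [hP'def]; simp
    have hSz : ∀ x : ℝ, cexpI x * Q'.eval (cexpI x)
        = -((starRingEnd ℂ) β) * P.eval (cexpI x) + (starRingEnd ℂ) α * Q.eval (cexpI x) := by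
      intro x
      have := congrArg (Polynomial.eval (cexpI x)) hSX
      rw [Polynomial.eval_mul, Polynomial.eval_X, hSdef] at this
      rw [this]
      simp
    have hnorm' : ∀ x : ℝ, ‖P'.eval (cexpI x)‖^2 + ‖Q'.eval (cexpI x)‖^2 = 1 := by
      intro x
      have hnq : ‖Q'.eval (cexpI x)‖ = ‖cexpI x * Q'.eval (cexpI x)‖ := by
        rw [norm_mul, show ‖cexpI x‖ = 1 from by rw [norm_cexpI], one_mul]
      rw [hnq]
      have hC : ((‖P'.eval (cexpI x)‖:ℂ))^2 + ((‖cexpI x * Q'.eval (cexpI x)‖:ℂ))^2 = 1 := by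
        rw [← Complex.mul_conj', ← Complex.mul_conj']
        have hsum : ((‖P.eval (cexpI x)‖:ℂ))^2 + ((‖Q.eval (cexpI x)‖:ℂ))^2 = 1 := by
          exact_mod_cast hnorm x
        rw [← Complex.mul_conj', ← Complex.mul_conj'] at hsum
        rw [hP'z x, hSz x]
        simp only [map_add, map_mul, map_neg, Complex.conj_conj]
        linear_combination (P.eval (cexpI x) * (starRingEnd ℂ) (P.eval (cexpI x))
          + Q.eval (cexpI x) * (starRingEnd ℂ) (Q.eval (cexpI x))) * hαβ + hsum
      exact_mod_cast hC
    obtain ⟨ω', θ', φ', hWL⟩ := ih P' Q' hP'deg hQ'deg hnorm'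
    have hαβnorm : ‖(starRingEnd ℂ) α‖^2 + ‖β‖^2 = 1 := by
      rw [RCLike.norm_conj]
      have : ((‖α‖ : ℂ))^2 + ((‖β‖ : ℂ))^2 = 1 := by
        rw [← Complex.mul_conj', ← Complex.mul_conj']
        exact hαβ
      exact_mod_cast this
    obtain ⟨ω0, θ0, φ0, heu⟩ := euler ((starRingEnd ℂ) α) β hαβnorm
    rw [Complex.conj_conj] at heu
    refine ⟨ω0, (fun m => if m = 0 then θ0 else θ' (m-1)),
      (fun m => if m = 0 then φ0 + ω' else φ' (m-1)), fun x => ?_⟩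
    have hθ : (fun m => if m = 0 then θ0 else θ' (m-1)) ∘ Nat.succ = θ' :=
      funext fun m => by simp
    have hφ : (fun m => if m = 0 then φ0 + ω' else φ' (m-1)) ∘ Nat.succ = φ' :=
      funext fun m => by simp
    have hW : Wqsp (l+1) ω0 (fun m => if m = 0 then θ0 else θ' (m-1))
        (fun m => if m = 0 then φ0 + ω' else φ' (m-1)) x
        = Rz ω0 * Ry θ0 * Rz φ0 * (Rz x * Wqsp l ω' θ' φ' x) := by
      rw [Wqsp_succ, hθ, hφ]
      simp only [reduceIte]
      rw [Wqsp_omega l ω' θ' φ' x]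
      have hmid : Rz (φ0 + ω') * (Rz x * Wqsp l 0 θ' φ' x)
          = Rz φ0 * (Rz x * (Rz ω' * Wqsp l 0 θ' φ' x)) := by
        have h1 : Rz (φ0 + ω') * Rz x = Rz φ0 * Rz x * Rz ω' := by
          rw [Rz_add, Rz_add, Rz_add]
          congr 1
          ring
        rw [← mul_assoc, h1]
        simp only [mul_assoc]
      simp only [mul_assoc]
      rw [hmid]
    have hB00 : (Rz x * Wqsp l ω' θ' φ' x) 0 0
        = cexpI (-(x/2)) * (Wqsp l ω' θ' φ' x) 0 0 := by
      rw [Rz_eq, Matrix.mul_apply, Fin.sum_univ_two]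
      simp
    have hB10 : (Rz x * Wqsp l ω' θ' φ' x) 1 0
        = cexpI (x/2) * (Wqsp l ω' θ' φ' x) 1 0 := by
      rw [Rz_eq, Matrix.mul_apply, Fin.sum_univ_two]
      simp
    have hU00 : (Rz ω0 * Ry θ0 * Rz φ0) 0 0 = (starRingEnd ℂ) α := by rw [heu]; simp
    have hU01 : (Rz ω0 * Ry θ0 * Rz φ0) 0 1 = -β := by rw [heu]; simp
    have hU10 : (Rz ω0 * Ry θ0 * Rz φ0) 1 0 = (starRingEnd ℂ) β := by rw [heu]; simp
    have hU11 : (Rz ω0 * Ry θ0 * Rz φ0) 1 1 = α := by rw [heu]; simp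
    have f1 : cexpI (-(x/2)) * cexpI (-((l:ℝ) * x)/2) = cexpI (-(((l+1:ℕ):ℝ) * x)/2) := by
      rw [← cexpI_add]; congr 1; push_cast; ring
    have f2 : cexpI (x/2) * cexpI (-((l:ℝ) * x)/2) = cexpI (-(((l+1:ℕ):ℝ) * x)/2) * cexpI x := by
      rw [← cexpI_add, ← cexpI_add]; congr 1; push_cast; ring
    have hWLx := hWL x
    constructor
    · rw [hW, Matrix.mul_apply, Fin.sum_univ_two, hU00, hU01, hB00, hB10, hWLx.1, hWLx.2]
      calc (starRingEnd ℂ) α * (cexpI (-(x/2)) * (cexpI (-((l:ℝ)*x)/2) * P'.eval (cexpI x)))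
            + (-β) * (cexpI (x/2) * (cexpI (-((l:ℝ)*x)/2) * Q'.eval (cexpI x)))
          = (cexpI (-(x/2)) * cexpI (-((l:ℝ)*x)/2)) * ((starRingEnd ℂ) α * P'.eval (cexpI x))
            - (cexpI (x/2) * cexpI (-((l:ℝ)*x)/2)) * (β * Q'.eval (cexpI x)) := by ring
        _ = cexpI (-(((l+1:ℕ):ℝ)*x)/2) * ((starRingEnd ℂ) α * P'.eval (cexpI x))
            - (cexpI (-(((l+1:ℕ):ℝ)*x)/2) * cexpI x) * (β * Q'.eval (cexpI x)) := by rw [f1, f2]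
        _ = cexpI (-(((l+1:ℕ):ℝ)*x)/2) * ((starRingEnd ℂ) α * P'.eval (cexpI x)
            - β * (cexpI x * Q'.eval (cexpI x))) := by ring
        _ = cexpI (-(((l+1:ℕ):ℝ)*x)/2) * ((starRingEnd ℂ) α * (α * P.eval (cexpI x) + β * Q.eval (cexpI x))
            - β * (-((starRingEnd ℂ) β) * P.eval (cexpI x) + (starRingEnd ℂ) α * Q.eval (cexpI x))) := by
              rw [hP'z x, hSz x]
        _ = (α * (starRingEnd ℂ) α + β * (starRingEnd ℂ) β)
            * (cexpI (-(((l+1:ℕ):ℝ)*x)/2) * P.eval (cexpI x)) := by ring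
        _ = cexpI (-(((l+1:ℕ):ℝ)*x)/2) * P.eval (cexpI x) := by rw [hαβ, one_mul]
    · rw [hW, Matrix.mul_apply, Fin.sum_univ_two, hU10, hU11, hB00, hB10, hWLx.1, hWLx.2]
      calc (starRingEnd ℂ) β * (cexpI (-(x/2)) * (cexpI (-((l:ℝ)*x)/2) * P'.eval (cexpI x)))
            + α * (cexpI (x/2) * (cexpI (-((l:ℝ)*x)/2) * Q'.eval (cexpI x)))
          = (cexpI (-(x/2)) * cexpI (-((l:ℝ)*x)/2)) * ((starRingEnd ℂ) β * P'.eval (cexpI x))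
            + (cexpI (x/2) * cexpI (-((l:ℝ)*x)/2)) * (α * Q'.eval (cexpI x)) := by ring
        _ = cexpI (-(((l+1:ℕ):ℝ)*x)/2) * ((starRingEnd ℂ) β * P'.eval (cexpI x))
            + (cexpI (-(((l+1:ℕ):ℝ)*x)/2) * cexpI x) * (α * Q'.eval (cexpI x)) := by rw [f1, f2]
        _ = cexpI (-(((l+1:ℕ):ℝ)*x)/2) * ((starRingEnd ℂ) β * P'.eval (cexpI x)
            + α * (cexpI x * Q'.eval (cexpI x))) := by ring
        _ = cexpI (-(((l+1:ℕ):ℝ)*x)/2) * ((starRingEnd ℂ) β * (α * P.eval (cexpI x) + β * Q.eval (cexpI x))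
            + α * (-((starRingEnd ℂ) β) * P.eval (cexpI x) + (starRingEnd ℂ) α * Q.eval (cexpI x))) := by
              rw [hP'z x, hSz x]
        _ = (α * (starRingEnd ℂ) α + β * (starRingEnd ℂ) β)
            * (cexpI (-(((l+1:ℕ):ℝ)*x)/2) * Q.eval (cexpI x)) := by ring
        _ = cexpI (-(((l+1:ℕ):ℝ)*x)/2) * Q.eval (cexpI x) := by rw [hαβ, one_mul]

/-- any real-valued trigonometric polynomial `F` of degree `L` with `|F(x)| ≤ 1`
is realized as the expectation `⟨e₀, W(x)† Z W(x) e₀⟩` of the Pauli-Z observable. -/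
theorem stmt_4 (L : ℕ) (c : ℤ → ℂ) (F : ℝ → ℂ)
    (hF : ∀ x : ℝ, F x =
      ∑ j ∈ Finset.Icc (-(L : ℤ)) (L : ℤ), c j * Complex.exp (Complex.I * j * x))
    (hreal : ∀ x : ℝ, (F x).im = 0)
    (hbound : ∀ x : ℝ, ‖F x‖ ≤ 1) :
    ∃ (ω : ℝ) (θ φ : ℕ → ℝ), ∀ x : ℝ,
      ((Wqsp L ω θ φ x)ᴴ * (!![1, 0; 0, -1] : Matrix (Fin 2) (Fin 2) ℂ) *
        Wqsp L ω θ φ x) 0 0 = F x := by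
  classical
  have hFr : ∀ x, F x = (((F x).re : ℝ) : ℂ) :=
    fun x => (Complex.conj_eq_iff_re.1 (Complex.conj_eq_iff_im.2 (hreal x))).symm
  have hFb : ∀ x, |(F x).re| ≤ 1 := by
    intro x
    refine le_trans (Complex.abs_re_le_norm (F x)) ?_
    exact hbound x
  -- the polynomial representing F
  set qpoly : Polynomial ℂ := ∑ k ∈ Finset.range (2*L+1), C (c ((k:ℤ) - L)) * X^k with hqpoly
  have hqpolycoeff : ∀ N, 2*L < N → qpoly.coeff N = 0 := by
    intro N hN
    rw [hqpoly, Polynomial.finset_sum_coeff]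
    apply Finset.sum_eq_zero
    intro k hk
    have : N ≠ k := by have := Finset.mem_range.1 hk; omega
    simp [Polynomial.coeff_C_mul, Polynomial.coeff_X_pow, this, Ne.symm this]
  have hqpolydeg : qpoly.natDegree ≤ 2*L :=
    Polynomial.natDegree_le_iff_coeff_eq_zero.2 fun N h => hqpolycoeff N h
  have hqpeval : ∀ x : ℝ, cexpI (-((L:ℝ)*x)) * qpoly.eval (cexpI x) = F x := by
    intro x
    rw [hqpoly, Polynomial.eval_finset_sum, Finset.mul_sum, hF x]
    rw [eq_comm]
    refine Finset.sum_nbij' (fun j => (j + L).toNat) (fun k => (k:ℤ) - L) ?_ ?_ ?_ ?_ ?_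
    · intro a ha
      simp only [Finset.mem_Icc] at ha
      simp only [Finset.mem_range]
      omega
    · intro a ha
      simp only [Finset.mem_range] at ha
      simp only [Finset.mem_Icc]
      omega
    · intro a ha
      simp only [Finset.mem_Icc] at ha
      omega
    · intro a ha
      simp only [Finset.mem_range] at ha
      omega
    · intro a ha
      simp only [Finset.mem_Icc] at ha
      simp only [Polynomial.eval_mul, Polynomial.eval_C, Polynomial.eval_pow, Polynomial.eval_X]
      have h1 : (((a + L).toNat : ℤ) - L) = a := by omega
      rw [h1, cexpI_pow]
      have h2 : cexpI (-((L:ℝ)*x)) * cexpI ((((a+L).toNat : ℕ):ℝ) * x) = Complex.exp (Complex.I * a * x) := by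
        rw [← cexpI_add, cexpI]
        congr 1
        have h3 : (-((L:ℝ)*x) + (((a+L).toNat : ℕ):ℝ) * x) = (a:ℝ) * x := by
          have h4 : (((a+L).toNat : ℕ):ℝ) = (a:ℝ) + (L:ℝ) := by
            have : (((a+L).toNat : ℕ):ℤ) = a + L := by omega
            exact_mod_cast congrArg (fun z : ℤ => (z:ℝ)) this
          rw [h4]; ring
        rw [h3]
        push_cast
        ring
      rw [← h2]
      ring
  set q₁ : Polynomial ℂ := C (2⁻¹ : ℂ) * (X^L + qpoly) with hq₁
  have hq₁deg : q₁.natDegree ≤ 2*L := by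
    rw [hq₁]
    refine le_trans (Polynomial.natDegree_C_mul_le _ _) ?_
    refine le_trans (Polynomial.natDegree_add_le _ _) (max_le ?_ hqpolydeg)
    rw [Polynomial.natDegree_X_pow]
    omega
  have hXLval : ∀ x : ℝ, cexpI (-((L:ℝ)*x)) * (cexpI x)^L = 1 := by
    intro x
    rw [cexpI_pow, ← cexpI_add]
    norm_num [cexpI]
  have hq₁val : ∀ x : ℝ, fval L q₁ x = (1 + (((F x).re : ℝ):ℂ))/2 := by
    intro x
    rw [fval, hq₁]
    simp only [Polynomial.eval_mul, Polynomial.eval_C, Polynomial.eval_add, Polynomial.eval_pow,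
      Polynomial.eval_X]
    have := hqpeval x
    rw [hFr x] at this
    calc cexpI (-((L:ℝ)*x)) * (2⁻¹ * ((cexpI x)^L + qpoly.eval (cexpI x)))
        = 2⁻¹ * (cexpI (-((L:ℝ)*x)) * (cexpI x)^L + cexpI (-((L:ℝ)*x)) * qpoly.eval (cexpI x)) := by
          ring
      _ = 2⁻¹ * (1 + (((F x).re : ℝ):ℂ)) := by rw [hXLval x, this]
      _ = (1 + (((F x).re : ℝ):ℂ))/2 := by ring
  have hq₁cond : ∀ x : ℝ, (fval L q₁ x).im = 0 ∧ 0 ≤ (fval L q₁ x).re := by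
    intro x
    rw [hq₁val x]
    have h5 : (1 + (((F x).re : ℝ):ℂ))/2 = (((1 + (F x).re)/2 : ℝ) : ℂ) := by push_cast; ring
    rw [h5]
    constructor
    · exact Complex.ofReal_im _
    · simp only [Complex.ofReal_re]
      have := abs_le.1 (hFb x)
      linarith [this.1]
  obtain ⟨Pp, hPdeg, hPval⟩ := fejer_riesz L q₁ hq₁deg hq₁cond
  have hPr : ∀ x : ℝ, ‖Pp.eval (cexpI x)‖^2 = (1 + (F x).re)/2 := by
    intro x
    have h6 := (hPval x).symm.trans (hq₁val x)
    have h5 : (1 + (((F x).re : ℝ):ℂ))/2 = (((1 + (F x).re)/2 : ℝ) : ℂ) := by push_cast; ring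
    rw [h5] at h6
    exact_mod_cast h6
  set q₂ : Polynomial ℂ := X^L - Pp * conjReflect L Pp with hq₂
  have hq₂deg : q₂.natDegree ≤ 2*L := by
    rw [hq₂]
    refine le_trans (Polynomial.natDegree_sub_le _ _) (max_le ?_ ?_)
    · rw [Polynomial.natDegree_X_pow]; omega
    · refine le_trans (Polynomial.natDegree_mul_le) ?_
      have := conjReflect_natDegree_le L Pp
      omega
  have hq₂val : ∀ x : ℝ, fval L q₂ x = 1 - ((‖Pp.eval (cexpI x)‖^2 : ℝ):ℂ) := by
    intro x
    rw [fval, hq₂, Polynomial.eval_sub, Polynomial.eval_pow, Polynomial.eval_X,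
      Polynomial.eval_mul, conjReflect_eval_circle L Pp hPdeg]
    have e1 := Complex.mul_conj' (Pp.eval (cexpI x))
    have e2 : cexpI (-((L:ℝ)*x)) * cexpI ((L:ℝ)*x) = 1 := by
      rw [← cexpI_add]; norm_num [cexpI]
    calc cexpI (-((L:ℝ)*x)) * ((cexpI x)^L - Pp.eval (cexpI x) * (cexpI ((L:ℝ)*x) * (starRingEnd ℂ) (Pp.eval (cexpI x))))
        = cexpI (-((L:ℝ)*x)) * (cexpI x)^L
          - (cexpI (-((L:ℝ)*x)) * cexpI ((L:ℝ)*x)) * (Pp.eval (cexpI x) * (starRingEnd ℂ) (Pp.eval (cexpI x))) := by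
          ring
      _ = 1 - 1 * (((‖Pp.eval (cexpI x)‖:ℝ):ℂ))^2 := by rw [hXLval x, e1, e2]
      _ = 1 - ((‖Pp.eval (cexpI x)‖^2 : ℝ):ℂ) := by push_cast; ring
  have hq₂cond : ∀ x : ℝ, (fval L q₂ x).im = 0 ∧ 0 ≤ (fval L q₂ x).re := by
    intro x
    rw [hq₂val x]
    have h7 : (1:ℂ) - ((‖Pp.eval (cexpI x)‖^2 : ℝ):ℂ) = (((1 - ‖Pp.eval (cexpI x)‖^2 : ℝ)):ℂ) := by
      push_cast; ring
    rw [h7]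
    constructor
    · exact Complex.ofReal_im _
    · simp only [Complex.ofReal_re]
      have h8 := hPr x
      have := abs_le.1 (hFb x)
      nlinarith [this.2]
  obtain ⟨Qp, hQdeg, hQval⟩ := fejer_riesz L q₂ hq₂deg hq₂cond
  have hQr : ∀ x : ℝ, ‖Qp.eval (cexpI x)‖^2 = 1 - ‖Pp.eval (cexpI x)‖^2 := by
    intro x
    have h6 := (hQval x).symm.trans (hq₂val x)
    have h7 : (1:ℂ) - ((‖Pp.eval (cexpI x)‖^2 : ℝ):ℂ) = (((1 - ‖Pp.eval (cexpI x)‖^2 : ℝ)):ℂ) := by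
      push_cast; ring
    rw [h7] at h6
    exact_mod_cast h6
  have hnorm : ∀ x : ℝ, ‖Pp.eval (cexpI x)‖^2 + ‖Qp.eval (cexpI x)‖^2 = 1 := by
    intro x
    rw [hQr x]
    ring
  obtain ⟨ω, θ, φ, hWx⟩ := qsp_synth L Pp Qp hPdeg hQdeg hnorm
  refine ⟨ω, θ, φ, fun x => ?_⟩
  have hW00 := (hWx x).1
  have hW10 := (hWx x).2
  have hE : cexpI (-((L:ℝ)*x)/2) * (starRingEnd ℂ) (cexpI (-((L:ℝ)*x)/2)) = 1 :=
    cexpI_mul_conj _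
  have key : ∀ w : ℂ, (starRingEnd ℂ) (cexpI (-((L:ℝ)*x)/2) * w) * (cexpI (-((L:ℝ)*x)/2) * w)
      = ((‖w‖^2 : ℝ):ℂ) := by
    intro w
    rw [map_mul]
    calc (starRingEnd ℂ) (cexpI (-((L:ℝ)*x)/2)) * (starRingEnd ℂ) w * (cexpI (-((L:ℝ)*x)/2) * w)
        = (cexpI (-((L:ℝ)*x)/2) * (starRingEnd ℂ) (cexpI (-((L:ℝ)*x)/2))) * (w * (starRingEnd ℂ) w) := by
          ring
      _ = 1 * (((‖w‖:ℝ):ℂ))^2 := by rw [hE, Complex.mul_conj']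
      _ = ((‖w‖^2 : ℝ):ℂ) := by push_cast; ring
  have hfin : ((‖Pp.eval (cexpI x)‖^2 : ℝ):ℂ) - ((‖Qp.eval (cexpI x)‖^2 : ℝ):ℂ) = F x := by
    rw [hPr x, hQr x, hPr x]
    conv_rhs => rw [hFr x]
    push_cast
    ring
  rw [Matrix.mul_apply, Fin.sum_univ_two, Matrix.mul_apply, Matrix.mul_apply,
    Fin.sum_univ_two, Fin.sum_univ_two, Matrix.conjTranspose_apply, Matrix.conjTranspose_apply]
  rw [show (!![1,0;0,-1] : Matrix (Fin 2) (Fin 2) ℂ) 0 0 = 1 from rfl,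
    show (!![1,0;0,-1] : Matrix (Fin 2) (Fin 2) ℂ) 0 1 = 0 from rfl,
    show (!![1,0;0,-1] : Matrix (Fin 2) (Fin 2) ℂ) 1 0 = 0 from rfl,
    show (!![1,0;0,-1] : Matrix (Fin 2) (Fin 2) ℂ) 1 1 = -1 from rfl]
  simp only [Complex.star_def]
  rw [hW00, hW10]
  have k1 := key (Pp.eval (cexpI x))
  have k2 := key (Qp.eval (cexpI x))
  linear_combination k1 - k2 + hfin
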